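/- Let f be a probability density on ℝ with f(x) ≤ M ψ(x) for all x and some M > 0, and let p ∈ (0,1). Then: (1) for every positive integer i and every σ ∈ (0, 1 − p^{1/i}), (K_σ^i f)(x) ≤ M (2/√3)^i ψ(px) for all x ∈ ℝ; (2) for every positive integer k and every σ ∈ (0, 1 − p^{1/k}), max(f_k(x), g_k(x), h_k(x)/2) ≤ 2M (4/√3)^k ψ(px) for all x ∈ ℝ. -/

import Mathlib

open MeasureTheory

/-- The Gaussian kernel `ψ(x) = π^{-1/2} exp(-x²)`. -/
noncomputable def gaussK (x : ℝ) : ℝ := (Real.sqrt Real.pi)⁻¹ * Real.exp (-x ^ 2)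

/-- The scaled Gaussian kernel `ψ_σ(x) = σ⁻¹ ψ(x/σ)`. -/
noncomputable def gaussKs (σ x : ℝ) : ℝ := σ⁻¹ * gaussK (x / σ)

/-- Convolution with `ψ_σ` : `K_σ f`. -/
noncomputable def convK (σ : ℝ) (f : ℝ → ℝ) : ℝ → ℝ := fun x => ∫ u, f u * gaussKs σ (x - u)

/-- `i`-fold application of `K_σ`, with `K_σ^0 f = f`. -/
noncomputable def convKiter (σ : ℝ) (f : ℝ → ℝ) : ℕ → ℝ → ℝ
  | 0 => f
  | i + 1 => convK σ (convKiter σ f i)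

/-- The iterates `f_0 = f`, `f_{j+1} = f - (K_σ f_j - f_j)`. -/
noncomputable def iterF (σ : ℝ) (f : ℝ → ℝ) : ℕ → ℝ → ℝ
  | 0 => f
  | j + 1 => fun x => f x - (convK σ (iterF σ f j) x - iterF σ f j x)

/-- `J_{σ,k} = {x : f_k(x) > f(x)/2}`. -/
def Jset (σ : ℝ) (f : ℝ → ℝ) (k : ℕ) : Set ℝ := {x | f x / 2 < iterF σ f k x}

-- `g_k = f_k 1_{J_{σ,k}} + (f/2) 1_{J_{σ,k}^c}`
open Classical in
noncomputable def gFun (σ : ℝ) (f : ℝ → ℝ) (k : ℕ) : ℝ → ℝ :=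
  fun x => if x ∈ Jset σ f k then iterF σ f k x else f x / 2

/-- `h_k = g_k / ∫ g_k`. -/
noncomputable def hFun (σ : ℝ) (f : ℝ → ℝ) (k : ℕ) : ℝ → ℝ :=
  fun x => gFun σ f k x / ∫ u, gFun σ f k u

lemma gauss_conv_integral {σ q : ℝ} (hσ : 0 < σ) (hq : 0 < q) (x : ℝ) :
    ∫ u, Real.exp (-(q*u)^2) * Real.exp (-((x-u)/σ)^2)
      = Real.sqrt (Real.pi / (q^2 + (σ⁻¹)^2)) * Real.exp (-(q^2/(1+q^2*σ^2)) * x^2) := by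
  set A : ℝ := q^2 + (σ⁻¹)^2 with hA
  have hApos : 0 < A := by positivity
  set m : ℝ := x/(σ^2*A) with hm
  have key : ∀ u : ℝ, Real.exp (-(q*u)^2) * Real.exp (-((x-u)/σ)^2)
      = Real.exp (-A*(u-m)^2) * Real.exp (-(q^2/(1+q^2*σ^2)) * x^2) := by
    intro u
    rw [← Real.exp_add, ← Real.exp_add]
    congr 1
    have hσ' : σ ≠ 0 := ne_of_gt hσ
    have h1 : (1+q^2*σ^2) ≠ 0 := by positivity
    have hA' : A ≠ 0 := ne_of_gt hApos
    rw [hm, hA]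
    field_simp
    ring
  simp_rw [key]
  rw [integral_mul_const, MeasureTheory.integral_sub_right_eq_self
    (fun u => Real.exp (-A*u^2)) m, integral_gaussian]

lemma gaussK_nonneg (x : ℝ) : 0 ≤ gaussK x := by unfold gaussK; positivity

lemma gaussKs_nonneg {σ : ℝ} (hσ : 0 < σ) (x : ℝ) : 0 ≤ gaussKs σ x := by
  unfold gaussKs gaussK; positivity

lemma gaussK_mono {a b : ℝ} (h : a^2 ≤ b^2) : gaussK b ≤ gaussK a := by
  unfold gaussK
  have := Real.exp_le_exp.2 (show -b^2 ≤ -a^2 by linarith)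
  have h2 : (0:ℝ) ≤ (Real.sqrt Real.pi)⁻¹ := by positivity
  exact mul_le_mul_of_nonneg_left this h2

lemma gauss_prod_integrable {σ q : ℝ} (hσ : 0 < σ) (hq : 0 < q) (x : ℝ) :
    Integrable (fun u => gaussK (q*u) * gaussKs σ (x-u)) := by
  set A : ℝ := q^2 + (σ⁻¹)^2 with hA
  have hApos : 0 < A := by positivity
  set m : ℝ := x/(σ^2*A) with hm
  have key : ∀ u : ℝ, gaussK (q*u) * gaussKs σ (x-u)
      = ((Real.sqrt Real.pi)⁻¹ * (σ⁻¹ * (Real.sqrt Real.pi)⁻¹ *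
          Real.exp (-(q^2/(1+q^2*σ^2)) * x^2))) * Real.exp (-A*(u-m)^2) := by
    intro u
    unfold gaussK gaussKs gaussK
    have : Real.exp (-(q*u)^2) * Real.exp (-((x-u)/σ)^2)
        = Real.exp (-A*(u-m)^2) * Real.exp (-(q^2/(1+q^2*σ^2)) * x^2) := by
      rw [← Real.exp_add, ← Real.exp_add]
      congr 1
      have hσ' : σ ≠ 0 := ne_of_gt hσ
      have h1 : (1+q^2*σ^2) ≠ 0 := by positivity
      have hA' : A ≠ 0 := ne_of_gt hApos
      rw [hm, hA]
      field_simp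
      ring
    calc (Real.sqrt Real.pi)⁻¹ * Real.exp (-(q*u)^2) * (σ⁻¹ * ((Real.sqrt Real.pi)⁻¹ * Real.exp (-((x-u)/σ)^2)))
        = (Real.sqrt Real.pi)⁻¹ * (σ⁻¹ * (Real.sqrt Real.pi)⁻¹) * (Real.exp (-(q*u)^2) * Real.exp (-((x-u)/σ)^2)) := by ring
      _ = _ := by rw [this]; ring
  simp_rw [key]
  exact ((integrable_exp_neg_mul_sq hApos).comp_sub_right m).const_mul _

lemma conv_step {σ q r C : ℝ} {F : ℝ → ℝ} (hσ : 0 < σ) (hq : 0 < q) (hr : 0 ≤ r)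
    (hr2 : r^2 * (1+q^2*σ^2) ≤ q^2) (hC : 0 ≤ C)
    (hF : ∀ u, |F u| ≤ C * gaussK (q*u)) (x : ℝ) :
    |convK σ F x| ≤ C * gaussK (r*x) := by
  have h1p : (0:ℝ) < 1 + q^2*σ^2 := by positivity
  have step1 : |convK σ F x| ≤ ∫ u, C * gaussK (q*u) * gaussKs σ (x-u) := by
    unfold convK
    refine (norm_integral_le_integral_norm (fun u => F u * gaussKs σ (x - u))).trans ?_
    apply integral_mono_of_nonneg
    · exact Filter.Eventually.of_forall fun u => norm_nonneg _
    · have := (gauss_prod_integrable hσ hq x).const_mul C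
      simpa [mul_assoc] using this
    · refine Filter.Eventually.of_forall fun u => ?_
      show ‖F u * gaussKs σ (x - u)‖ ≤ C * gaussK (q * u) * gaussKs σ (x - u)
      rw [norm_mul, mul_assoc]
      have h2 : ‖gaussKs σ (x-u)‖ = gaussKs σ (x-u) := abs_of_nonneg (gaussKs_nonneg hσ _)
      rw [h2, ← mul_assoc]
      exact mul_le_mul_of_nonneg_right (hF u) (gaussKs_nonneg hσ _)
  refine step1.trans ?_
  have expand : ∀ u, C * gaussK (q*u) * gaussKs σ (x-u)
      = (C * ((Real.sqrt Real.pi)⁻¹ * (σ⁻¹ * (Real.sqrt Real.pi)⁻¹))) *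
        (Real.exp (-(q*u)^2) * Real.exp (-((x-u)/σ)^2)) := by
    intro u; unfold gaussK gaussKs gaussK; ring
  simp_rw [expand]
  rw [integral_const_mul, gauss_conv_integral hσ hq]
  -- now: C * ((√π)⁻¹ * (σ⁻¹ * (√π)⁻¹)) * (√(π/A) * exp(-q'² x²)) ≤ C * gaussK (r x)
  set A : ℝ := q^2 + (σ⁻¹)^2 with hA
  have hApos : 0 < A := by positivity
  have hπ : (0:ℝ) < Real.pi := Real.pi_pos
  have hsA : Real.sqrt (Real.pi / A) ≤ σ * Real.sqrt Real.pi := by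
    rw [show σ * Real.sqrt Real.pi = Real.sqrt (σ^2 * Real.pi) by
      rw [Real.sqrt_mul (sq_nonneg σ), Real.sqrt_sq hσ.le]]
    apply Real.sqrt_le_sqrt
    rw [div_le_iff₀ hApos]
    have hAe : σ^2 * A = 1 + q^2*σ^2 := by
      rw [hA]; field_simp; ring
    have h1A : (1:ℝ) ≤ σ^2 * A := by nlinarith
    nlinarith [mul_le_mul_of_nonneg_left h1A hπ.le]
  have hexp : Real.exp (-(q^2/(1+q^2*σ^2)) * x^2) ≤ Real.exp (-(r*x)^2) := by
    apply Real.exp_le_exp.2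
    have : r^2 ≤ q^2/(1+q^2*σ^2) := (le_div_iff₀ h1p).2 hr2
    nlinarith [sq_nonneg x]
  unfold gaussK
  have hbig : ((Real.sqrt Real.pi)⁻¹ * (σ⁻¹ * (Real.sqrt Real.pi)⁻¹)) *
      (Real.sqrt (Real.pi / A) * Real.exp (-(q^2/(1+q^2*σ^2)) * x^2))
      ≤ (Real.sqrt Real.pi)⁻¹ * Real.exp (-(r*x)^2) := by
    have hs : (0:ℝ) < Real.sqrt Real.pi := Real.sqrt_pos.2 hπ
    have hfac : (Real.sqrt Real.pi)⁻¹ * (σ⁻¹ * (Real.sqrt Real.pi)⁻¹) * Real.sqrt (Real.pi / A)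
        ≤ (Real.sqrt Real.pi)⁻¹ := by
      have hone : (σ⁻¹ * (Real.sqrt Real.pi)⁻¹) * Real.sqrt (Real.pi / A) ≤ 1 := by
        have e1 : (σ⁻¹ * (Real.sqrt Real.pi)⁻¹) * (σ * Real.sqrt Real.pi) = 1 := by
          field_simp
        calc (σ⁻¹ * (Real.sqrt Real.pi)⁻¹) * Real.sqrt (Real.pi / A)
            ≤ (σ⁻¹ * (Real.sqrt Real.pi)⁻¹) * (σ * Real.sqrt Real.pi) :=
              mul_le_mul_of_nonneg_left hsA (by positivity)
          _ = 1 := e1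
      calc (Real.sqrt Real.pi)⁻¹ * (σ⁻¹ * (Real.sqrt Real.pi)⁻¹) * Real.sqrt (Real.pi / A)
          = (Real.sqrt Real.pi)⁻¹ * ((σ⁻¹ * (Real.sqrt Real.pi)⁻¹) * Real.sqrt (Real.pi / A)) := by
            ring
        _ ≤ (Real.sqrt Real.pi)⁻¹ * 1 := mul_le_mul_of_nonneg_left hone (by positivity)
        _ = (Real.sqrt Real.pi)⁻¹ := mul_one _
    calc ((Real.sqrt Real.pi)⁻¹ * (σ⁻¹ * (Real.sqrt Real.pi)⁻¹)) *
        (Real.sqrt (Real.pi / A) * Real.exp (-(q^2/(1+q^2*σ^2)) * x^2))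
        = ((Real.sqrt Real.pi)⁻¹ * (σ⁻¹ * (Real.sqrt Real.pi)⁻¹) * Real.sqrt (Real.pi / A)) *
          Real.exp (-(q^2/(1+q^2*σ^2)) * x^2) := by ring
      _ ≤ (Real.sqrt Real.pi)⁻¹ * Real.exp (-(q^2/(1+q^2*σ^2)) * x^2) := by
          apply mul_le_mul_of_nonneg_right hfac (Real.exp_nonneg _)
      _ ≤ _ := mul_le_mul_of_nonneg_left hexp (by positivity)
  calc C * ((Real.sqrt Real.pi)⁻¹ * (σ⁻¹ * (Real.sqrt Real.pi)⁻¹)) *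
      (Real.sqrt (Real.pi / A) * Real.exp (-(q^2/(1+q^2*σ^2)) * x^2))
      = C * (((Real.sqrt Real.pi)⁻¹ * (σ⁻¹ * (Real.sqrt Real.pi)⁻¹)) *
        (Real.sqrt (Real.pi / A) * Real.exp (-(q^2/(1+q^2*σ^2)) * x^2))) := by ring
    _ ≤ C * ((Real.sqrt Real.pi)⁻¹ * Real.exp (-(r*x)^2)) := mul_le_mul_of_nonneg_left hbig hC

lemma arith_bound {p σ : ℝ} (hp : 0 < p) (hp1 : p < 1) {i : ℕ} (hi : 1 ≤ i)
    (hσ0 : 0 < σ) (hσ : σ < 1 - p ^ ((i:ℝ)⁻¹)) : p^2 * (1 + (i:ℝ)*σ^2) ≤ 1 := by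
  set t := p ^ ((i:ℝ)⁻¹) with ht
  have ht0 : 0 < t := Real.rpow_pos_of_pos hp _
  have ht1 : t < 1 := by
    have : (0:ℝ) < (i:ℝ)⁻¹ := by positivity
    exact Real.rpow_lt_one hp.le hp1 this
  have hpt : t ^ i = p := Real.rpow_inv_natCast_pow hp.le (by omega)
  have hσt : σ^2 < (1-t)^2 := by nlinarith
  have ht2 : (0:ℝ) < t^2 := by positivity
  have ha : (0:ℝ) ≤ 1/t^2 - 1 := by
    have : t^2 ≤ 1 := by nlinarith
    have := one_le_one_div ht2 this
    linarith
  have hber : 1 + (i:ℝ) * (1/t^2 - 1) ≤ (1/t^2)^i := by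
    have h := one_add_mul_le_pow (show (-2:ℝ) ≤ 1/t^2 - 1 by linarith) i
    have : (1 + (1/t^2 - 1)) = 1/t^2 := by ring
    rwa [this] at h
  have hgap : (1-t)^2 ≤ 1/t^2 - 1 := by
    rw [le_sub_iff_add_le, le_div_iff₀ ht2]
    have h4 : t^2*(1-t) ≤ 1 := by nlinarith
    nlinarith [mul_nonneg (sub_nonneg.2 ht1.le) (show (0:ℝ) ≤ 1 + t - t^2*(1-t) by nlinarith)]
  have hchain : 1 + (i:ℝ)*σ^2 ≤ (1/t^2)^i := by
    have h1 : 1 + (i:ℝ)*σ^2 ≤ 1 + (i:ℝ)*(1/t^2-1) := by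
      have : σ^2 ≤ 1/t^2-1 := le_trans hσt.le hgap
      have hi0 : (0:ℝ) ≤ i := Nat.cast_nonneg i
      nlinarith
    linarith
  have hfin : p^2 * (1 + (i:ℝ)*σ^2) ≤ (t^2)^i * (1/t^2)^i := by
    have hp2 : p^2 = (t^2)^i := by rw [← hpt]; ring
    rw [hp2]
    exact mul_le_mul_of_nonneg_left hchain (by positivity)
  have : (t^2)^i * (1/t^2)^i = 1 := by
    rw [← mul_pow]
    have : t^2 * (1/t^2) = 1 := by field_simp
    rw [this, one_pow]
  linarith

lemma convKiter_bound {f : ℝ → ℝ} {M : ℝ} (hf0 : ∀ x, 0 ≤ f x)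
    (hM : 0 < M) (hfM : ∀ x, f x ≤ M * gaussK x) {σ : ℝ} (hσ : 0 < σ) :
    ∀ i : ℕ, ∀ x, |convKiter σ f i x| ≤ M * gaussK (Real.sqrt (1/(1+(i:ℝ)*σ^2)) * x) := by
  intro i
  induction i with
  | zero =>
    intro x
    have : Real.sqrt (1/(1+(0:ℕ)*σ^2)) = 1 := by norm_num
    rw [show convKiter σ f 0 = f from rfl, this, one_mul, abs_of_nonneg (hf0 x)]
    exact hfM x
  | succ i ih =>
    have hQpos : ∀ j : ℕ, (0:ℝ) < 1/(1+(j:ℝ)*σ^2) := by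
      intro j
      have : (0:ℝ) ≤ (j:ℝ) := Nat.cast_nonneg j
      positivity
    have hq : 0 < Real.sqrt (1/(1+(i:ℝ)*σ^2)) := Real.sqrt_pos.2 (hQpos i)
    have hr : 0 ≤ Real.sqrt (1/(1+((i:ℕ)+1:ℝ)*σ^2)) := Real.sqrt_nonneg _
    intro x
    have hstep := conv_step (F := convKiter σ f i) hσ hq
      (Real.sqrt_nonneg (1/(1+((i+1:ℕ):ℝ)*σ^2)))
      (r := Real.sqrt (1/(1+((i+1:ℕ):ℝ)*σ^2))) ?_ hM.le ih x
    · exact hstep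
    · rw [Real.sq_sqrt (hQpos (i+1)).le, Real.sq_sqrt (hQpos i).le]
      have h1 : (0:ℝ) < 1+(i:ℝ)*σ^2 := by positivity
      have h2 : (0:ℝ) < 1+((i+1:ℕ):ℝ)*σ^2 := by
        push_cast; nlinarith
      have : (1/(1+((i+1:ℕ):ℝ)*σ^2)) * (1 + (1/(1+(i:ℝ)*σ^2))*σ^2) = 1/(1+(i:ℝ)*σ^2) := by
        rw [show ((i+1:ℕ):ℝ) = (i:ℝ)+1 by push_cast; ring] at h2 ⊢
        field_simp
        ring_nf
      exact le_of_eq this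

lemma iterF_bound {f : ℝ → ℝ} {M : ℝ} (hf0 : ∀ x, 0 ≤ f x)
    (hM : 0 < M) (hfM : ∀ x, f x ≤ M * gaussK x) {σ : ℝ} (hσ : 0 < σ) :
    ∀ j : ℕ, ∀ x, |iterF σ f j x| ≤ (2^(j+1)-1)*M * gaussK (Real.sqrt (1/(1+(j:ℝ)*σ^2)) * x) := by
  have hQpos : ∀ j : ℕ, (0:ℝ) < 1/(1+(j:ℝ)*σ^2) := by
    intro j
    have : (0:ℝ) ≤ (j:ℝ) := Nat.cast_nonneg j
    positivity
  have hQle1 : ∀ j : ℕ, 1/(1+(j:ℝ)*σ^2) ≤ 1 := by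
    intro j
    have h1 : (0:ℝ) < 1+(j:ℝ)*σ^2 := by positivity
    rw [div_le_one h1]
    nlinarith [Nat.cast_nonneg (α := ℝ) j, sq_nonneg σ]
  have hQmono : ∀ j : ℕ, 1/(1+((j+1:ℕ):ℝ)*σ^2) ≤ 1/(1+(j:ℝ)*σ^2) := by
    intro j
    have h1 : (0:ℝ) < 1+(j:ℝ)*σ^2 := by positivity
    have h2 : (0:ℝ) < 1+((j+1:ℕ):ℝ)*σ^2 := by push_cast; nlinarith
    apply div_le_div_of_nonneg_left (by norm_num) h1
    push_cast; nlinarith [sq_nonneg σ]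
  intro j
  induction j with
  | zero =>
    intro x
    have h1 : Real.sqrt (1/(1+((0:ℕ):ℝ)*σ^2)) = 1 := by norm_num
    rw [show iterF σ f 0 = f from rfl, h1, one_mul, abs_of_nonneg (hf0 x)]
    calc f x ≤ M * gaussK x := hfM x
      _ ≤ (2^(0+1)-1)*M * gaussK x := by norm_num
  | succ j ih =>
    intro x
    set Cj : ℝ := (2^(j+1)-1)*M with hCj
    have hCj0 : 0 ≤ Cj := by
      have h2p : (1:ℝ) ≤ 2^(j+1) := by
        have : ((1:ℕ):ℝ) ≤ ((2^(j+1) : ℕ) : ℝ) := by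
          exact_mod_cast Nat.one_le_two_pow
        push_cast at this
        exact this
      exact mul_nonneg (by linarith) hM.le
    set qj := Real.sqrt (1/(1+(j:ℝ)*σ^2)) with hqj
    set qj1 := Real.sqrt (1/(1+((j+1:ℕ):ℝ)*σ^2)) with hqj1
    have hqjpos : 0 < qj := Real.sqrt_pos.2 (hQpos j)
    have hqj1nn : 0 ≤ qj1 := Real.sqrt_nonneg _
    -- ψ-monotonicity facts
    have hsq1 : (qj1*x)^2 ≤ x^2 := by
      have : qj1^2 ≤ 1 := by
        rw [hqj1, Real.sq_sqrt (hQpos (j+1)).le]; exact hQle1 (j+1)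
      nlinarith [sq_nonneg x]
    have hsq2 : (qj1*x)^2 ≤ (qj*x)^2 := by
      have : qj1^2 ≤ qj^2 := by
        rw [hqj1, hqj, Real.sq_sqrt (hQpos (j+1)).le, Real.sq_sqrt (hQpos j).le]
        exact hQmono j
      nlinarith [sq_nonneg x]
    -- bound on f
    have hbf : |f x| ≤ M * gaussK (qj1*x) := by
      rw [abs_of_nonneg (hf0 x)]
      calc f x ≤ M * gaussK x := hfM x
        _ ≤ M * gaussK (qj1*x) := mul_le_mul_of_nonneg_left (gaussK_mono hsq1) hM.le
    -- bound on f_j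
    have hbj : |iterF σ f j x| ≤ Cj * gaussK (qj1*x) :=
      (ih x).trans (mul_le_mul_of_nonneg_left (gaussK_mono hsq2) hCj0)
    -- bound on K f_j
    have hbK : |convK σ (iterF σ f j) x| ≤ Cj * gaussK (qj1*x) := by
      apply conv_step hσ hqjpos hqj1nn ?_ hCj0 (fun u => ih u) x
      rw [hqj1, hqj, Real.sq_sqrt (hQpos (j+1)).le, Real.sq_sqrt (hQpos j).le]
      have h1 : (0:ℝ) < 1+(j:ℝ)*σ^2 := by positivity
      have h2 : (0:ℝ) < 1+((j+1:ℕ):ℝ)*σ^2 := by push_cast; nlinarith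
      have : (1/(1+((j+1:ℕ):ℝ)*σ^2)) * (1 + (1/(1+(j:ℝ)*σ^2))*σ^2) = 1/(1+(j:ℝ)*σ^2) := by
        rw [show ((j+1:ℕ):ℝ) = (j:ℝ)+1 by push_cast; ring] at h2 ⊢
        field_simp
        ring_nf
      exact le_of_eq this
    have htri : |iterF σ f (j+1) x| ≤ |f x| + |convK σ (iterF σ f j) x| + |iterF σ f j x| := by
      rw [show iterF σ f (j+1) x = f x - (convK σ (iterF σ f j) x - iterF σ f j x) from rfl]
      calc |f x - (convK σ (iterF σ f j) x - iterF σ f j x)|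
          ≤ |f x| + |convK σ (iterF σ f j) x - iterF σ f j x| := abs_sub _ _
        _ ≤ |f x| + (|convK σ (iterF σ f j) x| + |iterF σ f j x|) := by
            have := abs_sub (convK σ (iterF σ f j) x) (iterF σ f j x)
            linarith
        _ = _ := by ring
    calc |iterF σ f (j+1) x| ≤ |f x| + |convK σ (iterF σ f j) x| + |iterF σ f j x| := htri
      _ ≤ M * gaussK (qj1*x) + Cj * gaussK (qj1*x) + Cj * gaussK (qj1*x) := by
          linarith
      _ = (M + 2*Cj) * gaussK (qj1*x) := by ring
      _ = (2^(j+1+1)-1)*M * gaussK (qj1*x) := by rw [hCj]; ring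


/-- Lemma 14: Gaussian tail control of `K_σ^i f`, `f_k`, `g_k`, `h_k/2`:
`K_σ^i f ≤ M (2/√3)^i ψ(p·)` for `σ < 1 − p^{1/i}`, and
`max(f_k, g_k, h_k/2) ≤ 2M (4/√3)^k ψ(p·)` for `σ < 1 − p^{1/k}`. -/
theorem stmt17 (f : ℝ → ℝ) (hf0 : ∀ x, 0 ≤ f x) (hfi : Integrable f)
    (hf1 : (∫ x, f x) = 1) (M : ℝ) (hM : 0 < M) (hfM : ∀ x, f x ≤ M * gaussK x)
    (p : ℝ) (hp : 0 < p) (hp1 : p < 1) :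
    (∀ i : ℕ, 1 ≤ i → ∀ σ : ℝ, 0 < σ → σ < 1 - p ^ ((i : ℝ)⁻¹) → ∀ x : ℝ,
      convKiter σ f i x ≤ M * (2 / Real.sqrt 3) ^ i * gaussK (p * x)) ∧
    (∀ k : ℕ, 1 ≤ k → ∀ σ : ℝ, 0 < σ → σ < 1 - p ^ ((k : ℝ)⁻¹) → ∀ x : ℝ,
      max (iterF σ f k x) (max (gFun σ f k x) (hFun σ f k x / 2)) ≤
        2 * M * (4 / Real.sqrt 3) ^ k * gaussK (p * x)) := by
  have h3pos : (0:ℝ) < Real.sqrt 3 := Real.sqrt_pos.2 (by norm_num)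
  have h32 : Real.sqrt 3 ≤ 2 := by
    rw [show (2:ℝ) = Real.sqrt 4 by
      rw [show (4:ℝ) = 2^2 by norm_num, Real.sqrt_sq (by norm_num : (0:ℝ) ≤ 2)]]
    exact Real.sqrt_le_sqrt (by norm_num)
  have h123 : (1:ℝ) ≤ 2/Real.sqrt 3 := by rw [le_div_iff₀ h3pos]; linarith
  have h243 : (2:ℝ) ≤ 4/Real.sqrt 3 := by rw [le_div_iff₀ h3pos]; linarith
  -- p ≤ √(1/(1+iσ²)) whenever σ < 1 - p^{1/i}
  have hpq : ∀ i : ℕ, 1 ≤ i → ∀ σ : ℝ, 0 < σ → σ < 1 - p ^ ((i : ℝ)⁻¹) →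
      p ≤ Real.sqrt (1/(1+(i:ℝ)*σ^2)) := by
    intro i hi σ hσ hσ'
    have h1 : (0:ℝ) < 1+(i:ℝ)*σ^2 := by
      have : (0:ℝ) ≤ (i:ℝ) := Nat.cast_nonneg i
      positivity
    rw [Real.le_sqrt' hp]
    rw [le_div_iff₀ h1]
    have := arith_bound hp hp1 hi hσ hσ'
    linarith
  constructor
  · -- Part 1
    intro i hi σ hσ hσ' x
    have hpqi := hpq i hi σ hσ hσ'
    have hmono : gaussK (Real.sqrt (1/(1+(i:ℝ)*σ^2)) * x) ≤ gaussK (p * x) := by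
      apply gaussK_mono
      nlinarith [sq_nonneg x, pow_le_pow_left₀ hp.le hpqi 2]
    have h1 : (1:ℝ) ≤ (2/Real.sqrt 3)^i := one_le_pow₀ h123
    calc convKiter σ f i x ≤ |convKiter σ f i x| := le_abs_self _
      _ ≤ M * gaussK (Real.sqrt (1/(1+(i:ℝ)*σ^2)) * x) := convKiter_bound hf0 hM hfM hσ i x
      _ ≤ M * gaussK (p*x) := mul_le_mul_of_nonneg_left hmono hM.le
      _ ≤ M * (2/Real.sqrt 3)^i * gaussK (p*x) := by
          have hψ := gaussK_nonneg (p*x)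
          have hMc : M ≤ M * (2/Real.sqrt 3)^i := by nlinarith
          exact mul_le_mul_of_nonneg_right hMc hψ
  · -- Part 2
    intro k hk σ hσ hσ' x
    have hpqk := hpq k hk σ hσ hσ'
    have hψ : 0 ≤ gaussK (p*x) := gaussK_nonneg _
    have hmono : gaussK (Real.sqrt (1/(1+(k:ℝ)*σ^2)) * x) ≤ gaussK (p * x) := by
      apply gaussK_mono
      nlinarith [sq_nonneg x, pow_le_pow_left₀ hp.le hpqk 2]
    have hmono1 : gaussK x ≤ gaussK (p * x) := by
      apply gaussK_mono
      nlinarith [sq_nonneg x, mul_nonneg (show (0:ℝ) ≤ 1-p by linarith) (show (0:ℝ) ≤ 1+p by linarith)]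
    have hpow1 : (1:ℝ) ≤ (4/Real.sqrt 3)^k := one_le_pow₀ (by linarith)
    have hCk : ((2:ℝ)^(k+1)-1) ≤ 2*(4/Real.sqrt 3)^k := by
      have h2k : (2:ℝ)^k ≤ (4/Real.sqrt 3)^k := pow_le_pow_left₀ (by norm_num) h243 k
      have : (2:ℝ)^(k+1) = 2*2^k := by ring
      nlinarith
    have hCk0 : (0:ℝ) ≤ (2^(k+1)-1)*M := by
      have h2p : (1:ℝ) ≤ 2^(k+1) := one_le_pow₀ (by norm_num)
      exact mul_nonneg (by linarith) hM.le
    have hB0 : 0 ≤ 2 * M * (4 / Real.sqrt 3) ^ k * gaussK (p * x) := by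
      apply mul_nonneg (by positivity) hψ
    -- f_k bound
    have hfk : iterF σ f k x ≤ 2 * M * (4 / Real.sqrt 3) ^ k * gaussK (p * x) := by
      calc iterF σ f k x ≤ |iterF σ f k x| := le_abs_self _
        _ ≤ (2^(k+1)-1)*M * gaussK (Real.sqrt (1/(1+(k:ℝ)*σ^2)) * x) := iterF_bound hf0 hM hfM hσ k x
        _ ≤ (2^(k+1)-1)*M * gaussK (p*x) := mul_le_mul_of_nonneg_left hmono hCk0
        _ ≤ (2*(4/Real.sqrt 3)^k*M) * gaussK (p * x) :=
            mul_le_mul_of_nonneg_right (mul_le_mul_of_nonneg_right hCk hM.le) hψ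
        _ = 2 * M * (4 / Real.sqrt 3) ^ k * gaussK (p * x) := by ring
    -- f/2 bound
    have hf2 : f x / 2 ≤ 2 * M * (4 / Real.sqrt 3) ^ k * gaussK (p * x) := by
      have h4 : f x ≤ M * gaussK (p*x) :=
        (hfM x).trans (mul_le_mul_of_nonneg_left hmono1 hM.le)
      have hMc : M ≤ 2*M*(4/Real.sqrt 3)^k := by
        nlinarith [mul_le_mul_of_nonneg_left hpow1 hM.le,
          mul_nonneg hM.le (le_trans zero_le_one hpow1)]
      have h5 : M * gaussK (p*x) ≤ 2*M*(4/Real.sqrt 3)^k * gaussK (p*x) :=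
        mul_le_mul_of_nonneg_right hMc hψ
      linarith
    -- g_k bound and nonnegativity
    have hg : gFun σ f k x ≤ 2 * M * (4 / Real.sqrt 3) ^ k * gaussK (p * x) := by
      unfold gFun
      split_ifs with hx
      · exact hfk
      · exact hf2
    have hgnn : ∀ y, 0 ≤ gFun σ f k y := by
      intro y
      unfold gFun
      split_ifs with hy
      · have : f y / 2 < iterF σ f k y := hy
        linarith [hf0 y]
      · linarith [hf0 y]
    have hfle : ∀ y, f y / 2 ≤ gFun σ f k y := by
      intro y
      unfold gFun
      split_ifs with hy
      · exact le_of_lt hy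
      · exact le_refl _
    -- h_k/2 bound
    have hh : hFun σ f k x / 2 ≤ 2 * M * (4 / Real.sqrt 3) ^ k * gaussK (p * x) := by
      by_cases hInt : Integrable (gFun σ f k)
      · have hint : (1:ℝ)/2 ≤ ∫ u, gFun σ f k u := by
          have hmle : ∫ u, f u / 2 ≤ ∫ u, gFun σ f k u := by
            apply integral_mono_of_nonneg
            · exact Filter.Eventually.of_forall fun u => by
                simp only [Pi.zero_apply]
                linarith [hf0 u]
            · exact hInt
            · exact Filter.Eventually.of_forall hfle
          rw [MeasureTheory.integral_div, hf1] at hmle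
          linarith
        have : hFun σ f k x / 2 ≤ gFun σ f k x := by
          unfold hFun
          rw [div_div]
          exact div_le_self (hgnn x) (by linarith)
        linarith
      · unfold hFun
        rw [integral_undef hInt, div_zero]
        simpa using hB0
    exact max_le hfk (max_le hg hh)
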